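/- Let φ(v) = e^{ρ⟨v⟩^β} on ℝ³ with ρ>0 and β∈(0,1], and let μ>0. Then there exists a constant C depending only on ρ, β, μ such that for any measurable h:ℝ³→ℝ with √φ·h ∈ L², the function v ↦ φ(v)^{-1/2}·∫_{ℝ³}|v-w|^μ h(w) dw belongs to L²(ℝ³) with ‖φ^{-1/2}(h ∗ |·|^μ)‖_{L²} ≤ C‖√φ·h‖_{L²}. -/

import Mathlib

open MeasureTheory


lemma aux_pow_exp (ρ : ℝ) (hρ : 0 < ρ) (p : ℝ) :
    ∃ M > (0:ℝ), ∀ u : ℝ, 1 ≤ u → u ^ p ≤ M * Real.exp (ρ * u) := by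
  set n : ℕ := ⌈p⌉₊ with hn
  refine ⟨((n : ℝ) / ρ) ^ n + 1, by positivity, fun u hu => ?_⟩
  have hu0 : (0:ℝ) < u := lt_of_lt_of_le one_pos hu
  have h1 : u ^ p ≤ u ^ (n:ℝ) := Real.rpow_le_rpow_of_exponent_le hu (Nat.le_ceil p)
  rw [Real.rpow_natCast] at h1
  have h2 : u ^ n ≤ ((n:ℝ) / ρ) ^ n * Real.exp (ρ * u) := by
    rcases Nat.eq_zero_or_pos n with h | h
    · simp only [h, pow_zero, one_mul]
      exact Real.one_le_exp (by positivity)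
    · have hnn : (0:ℝ) < (n:ℝ) := by exact_mod_cast h
      have key : (ρ * u / n) ^ n ≤ Real.exp (ρ * u) := by
        calc (ρ * u / n) ^ n ≤ (1 + ρ * u / n) ^ n := by
              apply pow_le_pow_left₀ (by positivity) (by nlinarith)
          _ ≤ (Real.exp (ρ * u / n)) ^ n := by
              apply pow_le_pow_left₀ (by positivity) (by linarith [Real.add_one_le_exp (ρ * u / n)])
          _ = Real.exp (ρ * u) := by
              rw [← Real.exp_nat_mul]; congr 1; field_simp
      calc u ^ n = ((n:ℝ) / ρ) ^ n * (ρ * u / n) ^ n := by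
            rw [← mul_pow]; congr 1; field_simp
        _ ≤ ((n:ℝ) / ρ) ^ n * Real.exp (ρ * u) :=
            mul_le_mul_of_nonneg_left key (by positivity)
  have he : 0 < Real.exp (ρ * u) := Real.exp_pos _
  nlinarith [h1, h2]

lemma aux_s_cont : Continuous (fun v : EuclideanSpace ℝ (Fin 3) => Real.sqrt (1 + ‖v‖ ^ 2)) :=
  Real.continuous_sqrt.comp (continuous_const.add (continuous_norm.pow 2))

lemma aux_s_one_le (v : EuclideanSpace ℝ (Fin 3)) : 1 ≤ Real.sqrt (1 + ‖v‖ ^ 2) :=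
  Real.one_le_sqrt.2 (by nlinarith [sq_nonneg ‖v‖])

lemma aux_s_pos (v : EuclideanSpace ℝ (Fin 3)) : 0 < Real.sqrt (1 + ‖v‖ ^ 2) :=
  lt_of_lt_of_le one_pos (aux_s_one_le v)

lemma aux_norm_le_s (v : EuclideanSpace ℝ (Fin 3)) : ‖v‖ ≤ Real.sqrt (1 + ‖v‖ ^ 2) :=
  (Real.le_sqrt (norm_nonneg v) (by positivity)).2 (by nlinarith)

lemma aux_A_int (ρ β μ : ℝ) (hρ : 0 < ρ) (hβ0 : 0 < β) (hμ : 0 ≤ μ) :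
    Integrable (fun v : EuclideanSpace ℝ (Fin 3) =>
      (Real.sqrt (1 + ‖v‖ ^ 2) ^ μ) ^ 2 * Real.exp (-(ρ * Real.sqrt (1 + ‖v‖ ^ 2) ^ β))) := by
  obtain ⟨M, hM, hMle⟩ := aux_pow_exp ρ hρ ((2 * μ + 4) / β)
  have hnr : ((Module.finrank ℝ (EuclideanSpace ℝ (Fin 3))) : ℝ) < 4 := by
    simp [finrank_euclideanSpace_fin]; norm_num
  have hint := (integrable_one_add_norm (E := EuclideanSpace ℝ (Fin 3)) (μ := volume)
    (r := 4) hnr).const_mul (16 * M)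
  refine hint.mono' ?_ (Filter.Eventually.of_forall fun v => ?_)
  · refine Continuous.aestronglyMeasurable ?_
    exact ((aux_s_cont.rpow_const fun v => Or.inr hμ).pow 2).mul
      (Real.continuous_exp.comp
        ((continuous_const.mul (aux_s_cont.rpow_const fun v => Or.inr hβ0.le)).neg))
  · set s : ℝ := Real.sqrt (1 + ‖v‖ ^ 2) with hs
    have hs1 : 1 ≤ s := aux_s_one_le v
    have hs0 : 0 < s := aux_s_pos v
    have hu1 : 1 ≤ s ^ β := by
      have h := Real.rpow_le_rpow_of_exponent_le hs1 hβ0.le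
      rwa [Real.rpow_zero] at h
    have key : s ^ ((2 * μ + 4 : ℝ)) ≤ M * Real.exp (ρ * s ^ β) := by
      have h := hMle (s ^ β) hu1
      rw [← Real.rpow_mul hs0.le] at h
      have hb : β * ((2 * μ + 4) / β) = 2 * μ + 4 := by field_simp
      rwa [hb] at h
    have hab : (s ^ μ) ^ 2 * s ^ (4:ℝ) = s ^ ((2 * μ + 4 : ℝ)) := by
      rw [sq, ← Real.rpow_add hs0, ← Real.rpow_add hs0]
      congr 1; ring
    have hc : (1 + ‖v‖) ^ ((4:ℝ)) ≤ 16 * s ^ (4:ℝ) := by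
      have h2s : 1 + ‖v‖ ≤ 2 * s := by nlinarith [aux_norm_le_s v]
      calc (1 + ‖v‖) ^ (4:ℝ) ≤ (2 * s) ^ (4:ℝ) :=
            Real.rpow_le_rpow (by positivity) h2s (by norm_num)
        _ = 16 * s ^ (4:ℝ) := by
            rw [Real.mul_rpow (by norm_num) hs0.le]
            norm_num
    rw [Real.norm_of_nonneg (by positivity), Real.exp_neg, Real.rpow_neg (by positivity),
      ← div_eq_mul_inv, ← div_eq_mul_inv, div_le_div_iff₀ (Real.exp_pos _) (by positivity)]
    calc (s ^ μ) ^ 2 * (1 + ‖v‖) ^ (4:ℝ) ≤ (s ^ μ) ^ 2 * (16 * s ^ (4:ℝ)) :=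
          mul_le_mul_of_nonneg_left hc (by positivity)
      _ = 16 * ((s ^ μ) ^ 2 * s ^ (4:ℝ)) := by ring
      _ = 16 * s ^ ((2 * μ + 4 : ℝ)) := by rw [hab]
      _ ≤ 16 * (M * Real.exp (ρ * s ^ β)) := by linarith [key]
      _ = 16 * M * Real.exp (ρ * s ^ β) := by ring

/-- The sub-exponential weight `φ(v) = exp (ρ ⟨v⟩^β)`. -/
noncomputable def phiw (ρ β : ℝ) (v : EuclideanSpace ℝ (Fin 3)) : ℝ :=
  Real.exp (ρ * Real.sqrt (1 + ‖v‖ ^ 2) ^ β)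

/-- `‖φ^{-1/2} (h ∗ |·|^μ)‖_{L²} ≤ C ‖√φ h‖_{L²}` with `C = C(ρ,β,μ)`,
stated with squared `L²` norms. -/
theorem stmt2 (ρ β μ : ℝ) (hρ : 0 < ρ) (hβ0 : 0 < β) (hβ1 : β ≤ 1) (hμ : 0 < μ) :
    ∃ C > (0:ℝ), ∀ h : EuclideanSpace ℝ (Fin 3) → ℝ, Measurable h →
      Integrable (fun v => phiw ρ β v * h v ^ 2) →
      Integrable (fun v => (phiw ρ β v)⁻¹ * (∫ w, ‖v - w‖ ^ μ * h w) ^ 2) ∧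
      (∫ v, (phiw ρ β v)⁻¹ * (∫ w, ‖v - w‖ ^ μ * h w) ^ 2)
        ≤ C ^ 2 * ∫ v, phiw ρ β v * h v ^ 2 := by
  have hA_int := aux_A_int ρ β μ hρ hβ0 hμ.le
  set sv : EuclideanSpace ℝ (Fin 3) → ℝ := fun v => Real.sqrt (1 + ‖v‖ ^ 2) with hsv
  set A : ℝ := ∫ v, (sv v ^ μ) ^ 2 * Real.exp (-(ρ * sv v ^ β)) with hA
  have hA_nonneg : 0 ≤ A := integral_nonneg fun v => by positivity
  have ht : (0:ℝ) < (2:ℝ) ^ μ := Real.rpow_pos_of_pos two_pos μ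
  refine ⟨(2:ℝ) ^ μ * A + 1, by nlinarith, fun h hmeas hint => ?_⟩
  -- half weights
  set f : EuclideanSpace ℝ (Fin 3) → ℝ :=
    fun w => sv w ^ μ * Real.exp (-(ρ / 2 * sv w ^ β)) with hf
  set g : EuclideanSpace ℝ (Fin 3) → ℝ :=
    fun w => Real.exp (ρ / 2 * sv w ^ β) * |h w| with hg
  have hf_nonneg : ∀ w, 0 ≤ f w := fun w => by
    simp only [hf]; positivity
  have hg_nonneg : ∀ w, 0 ≤ g w := fun w => by
    simp only [hg]; positivity
  have hf2 : ∀ w, f w ^ 2 = (sv w ^ μ) ^ 2 * Real.exp (-(ρ * sv w ^ β)) := by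
    intro w
    simp only [hf, mul_pow, sq (Real.exp _), ← Real.exp_add]
    congr 2; ring
  have hg2 : ∀ w, g w ^ 2 = phiw ρ β w * h w ^ 2 := by
    intro w
    simp only [hg, mul_pow, sq_abs, sq (Real.exp _), ← Real.exp_add, phiw]
    congr 2; ring
  have hfg : ∀ w, f w * g w = sv w ^ μ * |h w| := by
    intro w
    have e1 : Real.exp (-(ρ / 2 * sv w ^ β)) * Real.exp (ρ / 2 * sv w ^ β) = 1 := by
      rw [← Real.exp_add]; simp
    calc f w * g w
        = sv w ^ μ * (Real.exp (-(ρ / 2 * sv w ^ β)) * Real.exp (ρ / 2 * sv w ^ β)) * |h w| := by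
          simp only [hf, hg]; ring
      _ = sv w ^ μ * |h w| := by rw [e1]; ring
  have hf_cont : Continuous f := by
    refine ((aux_s_cont.rpow_const fun v => Or.inr hμ.le).mul
      (Real.continuous_exp.comp
        ((continuous_const.mul (aux_s_cont.rpow_const fun v => Or.inr hβ0.le)).neg)))
  have hg_meas : Measurable g :=
    ((Real.continuous_exp.comp
      (continuous_const.mul (aux_s_cont.rpow_const fun v => Or.inr hβ0.le))).measurable).mul
      hmeas.abs
  have hf2_int : Integrable (fun w => f w ^ 2) := by
    simpa only [hf2] using hA_int
  have hg2_int : Integrable (fun w => g w ^ 2) := by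
    simpa only [hg2] using hint
  have hf_mem : MemLp f 2 (volume) :=
    (memLp_two_iff_integrable_sq hf_cont.aestronglyMeasurable).2 hf2_int
  have hg_mem : MemLp g 2 (volume) :=
    (memLp_two_iff_integrable_sq hg_meas.aestronglyMeasurable).2 hg2_int
  have hfg_int : Integrable (fun w => f w * g w) := by
    refine (hf2_int.add hg2_int).mono' (hf_cont.measurable.mul hg_meas).aestronglyMeasurable
      (Filter.Eventually.of_forall fun w => ?_)
    rw [Real.norm_of_nonneg (mul_nonneg (hf_nonneg w) (hg_nonneg w))]
    simp only [Pi.add_apply]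
    nlinarith [sq_nonneg (f w - g w), sq_nonneg (f w + g w)]
  set B : ℝ := ∫ v, phiw ρ β v * h v ^ 2 with hB
  have hB_nonneg : 0 ≤ B := integral_nonneg fun v =>
    mul_nonneg (le_of_lt (Real.exp_pos _)) (sq_nonneg _)
  have hconj : Real.HolderConjugate 2 2 := ⟨by norm_num, two_pos, two_pos⟩
  have h2e : ENNReal.ofReal (2:ℝ) = 2 := by norm_num
  have hCS := integral_mul_le_Lp_mul_Lq_of_nonneg hconj
      (Filter.Eventually.of_forall hf_nonneg) (Filter.Eventually.of_forall hg_nonneg)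
      (by rw [h2e]; exact hf_mem) (by rw [h2e]; exact hg_mem)
  simp only [Real.rpow_two] at hCS
  have hIA : (∫ w, f w ^ 2) = A := by rw [hA]; simp only [hf2]
  have hIB : (∫ w, g w ^ 2) = B := by rw [hB]; simp only [hg2]
  rw [hIA, hIB] at hCS
  set I : ℝ := ∫ w, f w * g w with hI
  have hI_nonneg : 0 ≤ I := integral_nonneg fun w => mul_nonneg (hf_nonneg w) (hg_nonneg w)
  have hI2 : I ^ 2 ≤ A * B := by
    have sqr : ∀ x : ℝ, 0 ≤ x → (x ^ (1/2:ℝ)) ^ 2 = x := fun x hx => by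
      rw [← Real.rpow_natCast (x ^ (1/2:ℝ)) 2, ← Real.rpow_mul hx]; norm_num
    calc I ^ 2 ≤ (A ^ (1/2:ℝ) * B ^ (1/2:ℝ)) ^ 2 := pow_le_pow_left₀ hI_nonneg hCS 2
      _ = A * B := by rw [mul_pow, sqr A hA_nonneg, sqr B hB_nonneg]
  have hker : ∀ v w : EuclideanSpace ℝ (Fin 3),
      ‖v - w‖ ^ μ ≤ (2:ℝ) ^ μ * sv v ^ μ * sv w ^ μ := by
    intro v w
    have h1 : ‖v - w‖ ≤ 2 * sv v * sv w := by
      have h0 := norm_sub_le v w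
      nlinarith [aux_norm_le_s v, aux_norm_le_s w, aux_s_one_le v, aux_s_one_le w,
        norm_nonneg v, norm_nonneg w]
    calc ‖v - w‖ ^ μ ≤ (2 * sv v * sv w) ^ μ :=
          Real.rpow_le_rpow (norm_nonneg _) h1 hμ.le
      _ = (2:ℝ) ^ μ * sv v ^ μ * sv w ^ μ := by
          rw [Real.mul_rpow (by positivity) (aux_s_pos w).le,
              Real.mul_rpow (by norm_num) (aux_s_pos v).le]
  have hbd : ∀ v w : EuclideanSpace ℝ (Fin 3),
      ‖v - w‖ ^ μ * |h w| ≤ (2:ℝ) ^ μ * sv v ^ μ * (f w * g w) := by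
    intro v w
    calc ‖v - w‖ ^ μ * |h w| ≤ ((2:ℝ) ^ μ * sv v ^ μ * sv w ^ μ) * |h w| :=
          mul_le_mul_of_nonneg_right (hker v w) (abs_nonneg _)
      _ = (2:ℝ) ^ μ * sv v ^ μ * (f w * g w) := by rw [hfg w]; ring
  have hFint : ∀ v, Integrable (fun w => ‖v - w‖ ^ μ * h w) := by
    intro v
    refine (hfg_int.const_mul ((2:ℝ) ^ μ * sv v ^ μ)).mono'
      ((((continuous_const.sub continuous_id).norm.rpow_const
        fun x => Or.inr hμ.le).measurable.mul hmeas).aestronglyMeasurable)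
      (Filter.Eventually.of_forall fun w => ?_)
    rw [Real.norm_eq_abs, abs_mul, abs_of_nonneg (Real.rpow_nonneg (norm_nonneg _) _)]
    exact hbd v w
  have hF_meas : AEStronglyMeasurable (fun v => ∫ w, ‖v - w‖ ^ μ * h w) volume := by
    have hsm : StronglyMeasurable
        (fun p : (EuclideanSpace ℝ (Fin 3)) × (EuclideanSpace ℝ (Fin 3)) =>
          ‖p.1 - p.2‖ ^ μ * h p.2) := by
      apply Measurable.stronglyMeasurable
      exact (((continuous_fst.sub continuous_snd).norm.rpow_const
        fun x => Or.inr hμ.le).measurable).mul (hmeas.comp measurable_snd)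
    exact hsm.integral_prod_right'.aestronglyMeasurable
  have hFb : ∀ v, |∫ w, ‖v - w‖ ^ μ * h w| ≤ (2:ℝ) ^ μ * sv v ^ μ * I := by
    intro v
    calc |∫ w, ‖v - w‖ ^ μ * h w| ≤ ∫ w, |‖v - w‖ ^ μ * h w| := by
          have hni := norm_integral_le_integral_norm (μ := volume)
            (fun w => ‖v - w‖ ^ μ * h w)
          simp only [Real.norm_eq_abs] at hni
          exact hni
      _ ≤ ∫ w, (2:ℝ) ^ μ * sv v ^ μ * (f w * g w) := by
          refine integral_mono_of_nonneg (Filter.Eventually.of_forall fun w => abs_nonneg _)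
            (hfg_int.const_mul _) (Filter.Eventually.of_forall fun w => ?_)
          dsimp only
          rw [abs_mul, abs_of_nonneg (Real.rpow_nonneg (norm_nonneg _) _)]
          exact hbd v w
      _ = (2:ℝ) ^ μ * sv v ^ μ * I := by rw [integral_const_mul, hI]
  have hmain : ∀ v, (phiw ρ β v)⁻¹ * (∫ w, ‖v - w‖ ^ μ * h w) ^ 2
      ≤ ((2:ℝ) ^ μ) ^ 2 * I ^ 2 * ((sv v ^ μ) ^ 2 * Real.exp (-(ρ * sv v ^ β))) := by
    intro v
    have h1 : (∫ w, ‖v - w‖ ^ μ * h w) ^ 2 ≤ ((2:ℝ) ^ μ * sv v ^ μ * I) ^ 2 := by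
      rw [← sq_abs]
      exact pow_le_pow_left₀ (abs_nonneg _) (hFb v) 2
    have h2 : (phiw ρ β v)⁻¹ = Real.exp (-(ρ * sv v ^ β)) := by
      simp [phiw, Real.exp_neg, hsv]
    calc (phiw ρ β v)⁻¹ * (∫ w, ‖v - w‖ ^ μ * h w) ^ 2
        ≤ (phiw ρ β v)⁻¹ * ((2:ℝ) ^ μ * sv v ^ μ * I) ^ 2 :=
          mul_le_mul_of_nonneg_left h1 (inv_nonneg.2 (le_of_lt (Real.exp_pos _)))
      _ = ((2:ℝ) ^ μ) ^ 2 * I ^ 2 * ((sv v ^ μ) ^ 2 * Real.exp (-(ρ * sv v ^ β))) := by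
          rw [h2]; ring
  have hG_int : Integrable (fun v => (phiw ρ β v)⁻¹ * (∫ w, ‖v - w‖ ^ μ * h w) ^ 2) := by
    have hphi_cont : Continuous (fun v : EuclideanSpace ℝ (Fin 3) => (phiw ρ β v)⁻¹) := by
      refine (Real.continuous_exp.comp
        (continuous_const.mul (aux_s_cont.rpow_const fun v => Or.inr hβ0.le))).inv₀
        fun v => (Real.exp_pos _).ne'
    refine (hA_int.const_mul (((2:ℝ) ^ μ) ^ 2 * I ^ 2)).mono'
      ((hphi_cont.aemeasurable.mul (hF_meas.aemeasurable.pow_const 2)).aestronglyMeasurable)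
      (Filter.Eventually.of_forall fun v => ?_)
    rw [Real.norm_of_nonneg
      (mul_nonneg (inv_nonneg.2 (le_of_lt (show 0 < phiw ρ β v from Real.exp_pos _)))
        (sq_nonneg _))]
    exact hmain v
  refine ⟨hG_int, ?_⟩
  have hle : (∫ v, (phiw ρ β v)⁻¹ * (∫ w, ‖v - w‖ ^ μ * h w) ^ 2)
      ≤ ((2:ℝ) ^ μ) ^ 2 * I ^ 2 * A := by
    calc (∫ v, (phiw ρ β v)⁻¹ * (∫ w, ‖v - w‖ ^ μ * h w) ^ 2)
        ≤ ∫ v, ((2:ℝ) ^ μ) ^ 2 * I ^ 2 * ((sv v ^ μ) ^ 2 * Real.exp (-(ρ * sv v ^ β))) :=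
          integral_mono_of_nonneg
            (Filter.Eventually.of_forall fun v =>
              mul_nonneg (inv_nonneg.2 (le_of_lt (Real.exp_pos _))) (sq_nonneg _))
            (hA_int.const_mul _) (Filter.Eventually.of_forall hmain)
      _ = ((2:ℝ) ^ μ) ^ 2 * I ^ 2 * A := by rw [integral_const_mul, hA]
  have hfin : ((2:ℝ) ^ μ) ^ 2 * I ^ 2 * A ≤ ((2:ℝ) ^ μ * A + 1) ^ 2 * B := by
    nlinarith [hI2, mul_le_mul_of_nonneg_left hI2
        (show (0:ℝ) ≤ ((2:ℝ) ^ μ) ^ 2 * A by positivity),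
      mul_nonneg (mul_nonneg ht.le hA_nonneg) hB_nonneg, hB_nonneg, hA_nonneg, ht.le]
  linarith
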